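/- Let K be a field of characteristic 0 and a, b, c ∈ K with a ≠ 0 and c ≠ 0. For t ∈ K let γ(t) denote the 3×3 matrix with rows (1,0,0), (a·t,1,0), (b·t+(a·c/2)·t², c·t, 1). A homogeneous polynomial F ∈ K[x,y,z] of degree 2 satisfies F∘γ(t) = F for all t ∈ K if and only if F is a K-linear combination of x² and c·y² + 2b·x·y − 2a·x·z. -/

import Mathlib

open MvPolynomial

/-- The polynomial `F ∘ M`, obtained by substituting the variable `i` by
`∑ j, M i j * X j` in `F`. -/
noncomputable def applyMatrix {K : Type*} [Field K]
    (M : Matrix (Fin 3) (Fin 3) K) (F : MvPolynomial (Fin 3) K) :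
    MvPolynomial (Fin 3) K :=
  aeval (fun i => ∑ j : Fin 3, C (M i j) * X j) F

lemma fin3_deg2 (m : Fin 3 →₀ ℕ) (h : m 0 + m 1 + m 2 = 2) :
    m = Finsupp.single 0 2 ∨ m = Finsupp.single 1 2 ∨ m = Finsupp.single 2 2 ∨
    m = Finsupp.single 0 1 + Finsupp.single 1 1 ∨
    m = Finsupp.single 0 1 + Finsupp.single 2 1 ∨
    m = Finsupp.single 1 1 + Finsupp.single 2 1 := by
  have h0 : m 0 = 0 ∨ m 0 = 1 ∨ m 0 = 2 := by omega
  have h1 : m 1 = 0 ∨ m 1 = 1 ∨ m 1 = 2 := by omega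
  have h2 : m 2 = 0 ∨ m 2 = 1 ∨ m 2 = 2 := by omega
  rcases h0 with h0|h0|h0 <;> rcases h1 with h1|h1|h1 <;> rcases h2 with h2|h2|h2 <;>
    first
    | omega
    | (refine Or.inl ?_; ext i; fin_cases i <;> (simp_all [Finsupp.single_apply]; done))
    | (refine Or.inr (Or.inl ?_); ext i; fin_cases i <;>
        (simp_all [Finsupp.single_apply]; done))
    | (refine Or.inr (Or.inr (Or.inl ?_)); ext i; fin_cases i <;>
        (simp_all [Finsupp.single_apply]; done))
    | (refine Or.inr (Or.inr (Or.inr (Or.inl ?_))); ext i; fin_cases i <;>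
        (simp_all [Finsupp.single_apply]; done))
    | (refine Or.inr (Or.inr (Or.inr (Or.inr (Or.inl ?_)))); ext i; fin_cases i <;>
        (simp_all [Finsupp.single_apply]; done))
    | (refine Or.inr (Or.inr (Or.inr (Or.inr (Or.inr ?_)))); ext i; fin_cases i <;>
        first
        | (simp_all [Finsupp.single_apply]; done)
        | simp_all [Finsupp.single_apply])

lemma decomp_deg2 {K : Type*} [Field K] (F : MvPolynomial (Fin 3) K)
    (hF : F.IsHomogeneous 2) :
    ∃ p q r s u v : K,
      F = C p * X 0 ^ 2 + C q * X 1 ^ 2 + C r * X 2 ^ 2 + C s * (X 0 * X 1)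
        + C u * (X 0 * X 2) + C v * (X 1 * X 2) := by
  refine ⟨F.coeff (Finsupp.single 0 2), F.coeff (Finsupp.single 1 2),
    F.coeff (Finsupp.single 2 2),
    F.coeff (Finsupp.single 0 1 + Finsupp.single 1 1),
    F.coeff (Finsupp.single 0 1 + Finsupp.single 2 1),
    F.coeff (Finsupp.single 1 1 + Finsupp.single 2 1), ?_⟩
  have hm : ∀ (i j : Fin 3) (e : K), C e * (X i * X j) =
      monomial (Finsupp.single i 1 + Finsupp.single j 1) e := by
    intro i j e
    rw [monomial_eq]
    simp [Finsupp.prod_add_index, pow_add, Finsupp.prod_single_index]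
  have hm2 : ∀ (i : Fin 3) (e : K), C e * X i ^ 2 = monomial (Finsupp.single i 2) e := by
    intro i e
    rw [monomial_eq]
    simp [Finsupp.prod_single_index]
  rw [hm, hm, hm, hm2, hm2, hm2]
  ext m
  by_cases hdeg : m 0 + m 1 + m 2 = 2
  · rcases fin3_deg2 m hdeg with h|h|h|h|h|h <;> subst h <;>
      simp [coeff_monomial, Finsupp.ext_iff, Fin.forall_fin_succ, Finsupp.single_apply]
  · have hd : m.degree ≠ 2 := by
      rw [Finsupp.degree_apply]
      rwa [Finset.sum_subset (Finset.subset_univ m.support)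
        (fun i _ hi => Finsupp.notMem_support_iff.mp hi), Fin.sum_univ_three]
    rw [hF.coeff_eq_zero hd]
    have : ∀ d : Fin 3 →₀ ℕ, d 0 + d 1 + d 2 = 2 →
        coeff m (monomial d (F.coeff d)) = 0 := by
      intro d hd2
      rw [coeff_monomial, if_neg]
      rintro rfl; exact hdeg hd2
    simp only [coeff_add]
    rw [this _ (by simp), this _ (by simp), this _ (by simp),
      this _ (by simp [Finsupp.single_apply]), this _ (by simp [Finsupp.single_apply]),
      this _ (by simp [Finsupp.single_apply])]
    ring


set_option maxHeartbeats 1000000 in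
theorem invariant_conics_of_additive_subgroup
    {K : Type*} [Field K] [CharZero K] (a b c : K) (ha : a ≠ 0) (hc : c ≠ 0)
    (γ : K → Matrix (Fin 3) (Fin 3) K)
    (hγ : ∀ t, γ t = !![1, 0, 0; a * t, 1, 0;
        b * t + (a * c / 2) * t ^ 2, c * t, 1])
    (F : MvPolynomial (Fin 3) K) (hF : F.IsHomogeneous 2) :
    (∀ t : K, applyMatrix (γ t) F = F) ↔
      ∃ α β : K,
        F = MvPolynomial.C α * (X 0) ^ 2 +
          MvPolynomial.C β *
            (MvPolynomial.C c * (X 1) ^ 2 + MvPolynomial.C (2 * b) * X 0 * X 1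
              - MvPolynomial.C (2 * a) * X 0 * X 2) := by
  constructor
  · -- forward direction
    intro hinv
    obtain ⟨p, q, r, s, u, v, hFe⟩ := decomp_deg2 F hF
    have key : ∀ t x0 x1 x2 : K,
        p*x0^2 + q*(a*t*x0+x1)^2 + r*((b*t+a*c/2*t^2)*x0+c*t*x1+x2)^2
          + s*(x0*(a*t*x0+x1)) + u*(x0*((b*t+a*c/2*t^2)*x0+c*t*x1+x2))
          + v*((a*t*x0+x1)*((b*t+a*c/2*t^2)*x0+c*t*x1+x2))
        = p*x0^2 + q*x1^2 + r*x2^2 + s*(x0*x1) + u*(x0*x2) + v*(x1*x2) := by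
      intro t x0 x1 x2
      have h0 := hinv t
      rw [hFe] at h0
      have h1 := congrArg (eval ![x0, x1, x2]) h0
      simp [applyMatrix, hγ, Fin.sum_univ_three] at h1
      linear_combination h1
    have e1 : r*c^2 + v*c = 0 := by linear_combination key 1 0 1 0
    have e2 : r*c^2 - v*c = 0 := by linear_combination key (-1) 0 1 0
    have hv : v = 0 := by
      have hv' : v*c = 0 := by linear_combination (e1 - e2)/2
      exact (mul_eq_zero.mp hv').resolve_right hc
    have hr : r = 0 := by
      have hr' : r*c^2 = 0 := by linear_combination (e1 + e2)/2
      exact (mul_eq_zero.mp hr').resolve_right (pow_ne_zero 2 hc)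
    subst hv hr
    have e3 : 2*a*q + u*c = 0 := by linear_combination key 1 1 1 0 - key 1 1 0 0
    have e4 : s*a + u*b = 0 := by linear_combination (key 1 1 0 0 - key (-1) 1 0 0)/2
    refine ⟨p, q/c, ?_⟩
    have hq2 : (C q : MvPolynomial (Fin 3) K) = C (q/c) * C c := by
      rw [← C_mul, div_mul_cancel₀ _ hc]
    have hsc : s*c - 2*b*q = 0 := by
      have h5 : a*(s*c - 2*b*q) = 0 := by linear_combination c*e4 - b*e3
      exact (mul_eq_zero.mp h5).resolve_left ha
    have hs2 : (C s : MvPolynomial (Fin 3) K) = C (q/c) * C (2*b) := by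
      rw [← C_mul]
      congr 1
      field_simp
      linear_combination hsc
    have hu2 : (C u : MvPolynomial (Fin 3) K) = -(C (q/c) * C (2*a)) := by
      rw [← C_mul, ← C_neg]
      congr 1
      field_simp
      linear_combination e3
    rw [hFe, hq2, hs2, hu2]
    simp only [map_zero, zero_mul, add_zero]
    ring
  · -- converse direction
    rintro ⟨α, β, rfl⟩ t
    clear hF
    apply MvPolynomial.funext
    intro x
    have h : eval x ((MvPolynomial.C α * (X 0) ^ 2 +
            MvPolynomial.C β *
              (MvPolynomial.C c * (X 1) ^ 2 + MvPolynomial.C (2 * b) * X 0 * X 1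
                - MvPolynomial.C (2 * a) * X 0 * X 2) : MvPolynomial (Fin 3) K))
        = α * (x 0)^2 + β * (c * (x 1)^2 + 2*b*(x 0)*(x 1) - 2*a*(x 0)*(x 2)) := by
      simp
    rw [h]
    have h2 : eval x (applyMatrix (γ t) (MvPolynomial.C α * (X 0) ^ 2 +
            MvPolynomial.C β *
              (MvPolynomial.C c * (X 1) ^ 2 + MvPolynomial.C (2 * b) * X 0 * X 1
                - MvPolynomial.C (2 * a) * X 0 * X 2)))
        = α * (x 0)^2 + β * (c * (a*t*(x 0) + x 1)^2
            + 2*b*(x 0)*(a*t*(x 0) + x 1)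
            - 2*a*(x 0)*((b*t + a*c/2*t^2)*(x 0) + c*t*(x 1) + x 2)) := by
      simp [applyMatrix, hγ, Fin.sum_univ_three]
      try ring
    rw [h2]
    ring
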